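/- Fix real numbers α and β with α ≥ 1/2 and β ≥ α/2. Then for every ω > 0 and every stepsize h > 0, all complex eigenvalues of the Newmark amplification matrix T_{α,β,ω,h} have absolute value at most 1. That is, the Newmark method with α ≥ 1/2 and β ≥ α/2 is unconditionally (spectrally) stable for the undamped linear oscillator, regardless of the stepsize. -/

import Mathlib

/-- The Newmark amplification matrix `T_{α,β,ω,h}` for the scalar oscillator
`ẍ = -ω²·x`, acting on states `(x, v, a) ∈ ℝ³`: it sends `(x, v, a)` to the
unique `(x', v', a')` with `x' = (x + h·v + (1/2 − β)·h²·a)/(1 + β·ω²·h²)`,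
`a' = −ω²·x'`, `v' = v + h·((1 − α)·a + α·a')`. -/
noncomputable def NewmarkMatrix (ω h α β : ℝ) : Matrix (Fin 3) (Fin 3) ℝ :=
  let D := 1 + β * ω ^ 2 * h ^ 2
  !![1 / D, h / D, (1 / 2 - β) * h ^ 2 / D;
     -(α * ω ^ 2 * h) / D, 1 - α * ω ^ 2 * h ^ 2 / D,
       h * (1 - α) - α * (1 / 2 - β) * ω ^ 2 * h ^ 3 / D;
     -ω ^ 2 / D, -(ω ^ 2 * h) / D, -((1 / 2 - β) * ω ^ 2 * h ^ 2) / D]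

/-- A real root of `X² - TX + C` with `C ≤ 1`, `1 - T + C ≥ 0`, `1 + T + C ≥ 0`
satisfies `x² ≤ 1`. -/
lemma real_quad_root_sq_le_one (T C x : ℝ) (hre : x * x - T * x + C = 0)
    (hC : C ≤ 1) (h2 : 0 ≤ 1 - T + C) (h3 : 0 ≤ 1 + T + C) : x ^ 2 ≤ 1 := by
  by_contra hcon
  push_neg at hcon
  rcases lt_or_ge 1 x with hx1 | hx1
  · -- x > 1
    have hT : 1 + x ≤ T := by
      by_contra hT
      push_neg at hT
      nlinarith [mul_pos (show (0:ℝ) < x - 1 by linarith)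
        (show (0:ℝ) < x + 1 - T by linarith)]
    nlinarith [mul_nonneg (show (0:ℝ) ≤ x by linarith)
      (show (0:ℝ) ≤ T - x - 1 by linarith)]
  · -- then x < -1
    have hxneg : x < -1 := by nlinarith
    have hT : T ≤ x - 1 := by
      by_contra hT
      push_neg at hT
      nlinarith [mul_pos (show (0:ℝ) < -1 - x by linarith)
        (show (0:ℝ) < T - x + 1 by linarith)]
    nlinarith [mul_nonneg (show (0:ℝ) ≤ -x by linarith)
      (show (0:ℝ) ≤ x - T - 1 by linarith)]

/-- Roots of a real monic quadratic `μ² - Tμ + C` with `C ≤ 1`, `1 - T + C ≥ 0`,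
`1 + T + C ≥ 0` lie in the closed unit disc. -/
lemma quad_root_abs_le_one (T C : ℝ) (μ : ℂ)
    (hq : μ ^ 2 - (T : ℂ) * μ + (C : ℂ) = 0)
    (hC : C ≤ 1) (h2 : 0 ≤ 1 - T + C) (h3 : 0 ≤ 1 + T + C) :
    ‖μ‖ ≤ 1 := by
  have hre := congrArg Complex.re hq
  have him := congrArg Complex.im hq
  simp [pow_two, Complex.add_re, Complex.add_im, Complex.sub_re, Complex.sub_im,
    Complex.mul_re, Complex.mul_im, Complex.ofReal_re, Complex.ofReal_im] at hre him
  have hsq : μ.re ^ 2 + μ.im ^ 2 ≤ 1 := by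
    rcases eq_or_ne μ.im 0 with h0 | h0
    · rw [h0] at hre ⊢
      simp only [mul_zero, zero_mul, sub_zero, add_zero] at hre
      have := real_quad_root_sq_le_one T C μ.re hre hC h2 h3
      nlinarith
    · have hxT : T = 2 * μ.re := by
        have hfac : μ.im * (μ.re + μ.re - T) = 0 := by linarith [him]
        rcases mul_eq_zero.mp hfac with hf | hf
        · exact absurd hf h0
        · linarith
      nlinarith [hre, sq_nonneg μ.im]
  have habs : ‖μ‖ ^ 2 = μ.re ^ 2 + μ.im ^ 2 := by
    rw [Complex.sq_norm, Complex.normSq_apply]; ring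
  nlinarith [norm_nonneg μ, habs]

set_option maxHeartbeats 1000000 in
/-- The characteristic polynomial identity for the Newmark matrix. -/
lemma newmark_det (α β ω h : ℝ) (μ : ℂ)
    (hD : ((1 : ℂ) + (β : ℂ) * (ω : ℂ) ^ 2 * (h : ℂ) ^ 2) ≠ 0) :
    (μ • (1 : Matrix (Fin 3) (Fin 3) ℂ) - (NewmarkMatrix ω h α β).map Complex.ofReal).det
      = μ * (μ ^ 2
          - (((2 - (α + 1 / 2 - 2 * β) * (ω ^ 2 * h ^ 2)) / (1 + β * ω ^ 2 * h ^ 2) : ℝ) : ℂ) * μ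
          + (((1 + (1 / 2 - α + β) * (ω ^ 2 * h ^ 2)) / (1 + β * ω ^ 2 * h ^ 2) : ℝ) : ℂ)) := by
  have hMat : μ • (1 : Matrix (Fin 3) (Fin 3) ℂ) - (NewmarkMatrix ω h α β).map Complex.ofReal
      = ((1 : ℂ) + (β : ℂ) * (ω : ℂ) ^ 2 * (h : ℂ) ^ 2)⁻¹ •
        !![μ * (1 + (β : ℂ) * (ω : ℂ) ^ 2 * (h : ℂ) ^ 2) - 1, -(h : ℂ),
             -((1 / 2 - (β : ℂ)) * (h : ℂ) ^ 2);
           (α : ℂ) * (ω : ℂ) ^ 2 * (h : ℂ),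
             μ * (1 + (β : ℂ) * (ω : ℂ) ^ 2 * (h : ℂ) ^ 2)
               - (1 + ((β : ℂ) - (α : ℂ)) * (ω : ℂ) ^ 2 * (h : ℂ) ^ 2),
             -((h : ℂ) * (1 - (α : ℂ)) * (1 + (β : ℂ) * (ω : ℂ) ^ 2 * (h : ℂ) ^ 2)
               - (α : ℂ) * (1 / 2 - (β : ℂ)) * (ω : ℂ) ^ 2 * (h : ℂ) ^ 3);
           (ω : ℂ) ^ 2, (ω : ℂ) ^ 2 * (h : ℂ),
             μ * (1 + (β : ℂ) * (ω : ℂ) ^ 2 * (h : ℂ) ^ 2)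
               + (1 / 2 - (β : ℂ)) * (ω : ℂ) ^ 2 * (h : ℂ) ^ 2] := by
    ext i j
    fin_cases i <;> fin_cases j <;>
      simp [NewmarkMatrix, Matrix.one_apply, Matrix.map_apply] <;>
      push_cast <;>
      field_simp <;>
      ring <;>
      (have hD' : (1 + (ω:ℂ) ^ 2 * (h:ℂ) ^ 2 * (β:ℂ)) ≠ 0 := (fun H => hD (by linear_combination H))
       field_simp; ring)
  rw [hMat, Matrix.det_smul, Matrix.det_fin_three, Fintype.card_fin]
  simp only [Matrix.of_apply, Matrix.cons_val', Matrix.cons_val_zero, Matrix.cons_val_one,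
    Matrix.head_cons, Matrix.empty_val', Matrix.cons_val_fin_one, Matrix.cons_val_two,
    Matrix.tail_cons, Matrix.head_fin_const]
  push_cast
  field_simp
  ring

/-- If α ≥ 1/2 and β ≥ α/2, then for every ω > 0 and every stepsize h > 0 all
complex eigenvalues of the Newmark amplification matrix have absolute value at
most 1: the Newmark method is unconditionally (spectrally) stable for the
undamped linear oscillator. -/
theorem newmark_unconditional_stability (α β : ℝ)
    (hα : 1 / 2 ≤ α) (hβ : α / 2 ≤ β) :
    ∀ ω h : ℝ, 0 < ω → 0 < h →
      ∀ μ : ℂ,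
        Module.End.HasEigenvalue
          (Matrix.toLin' ((NewmarkMatrix ω h α β).map Complex.ofReal)) μ →
        ‖μ‖ ≤ 1 := by
  intro ω h hw hh μ hev
  obtain ⟨v, hv⟩ := hev.exists_hasEigenvector
  have hmul : ((NewmarkMatrix ω h α β).map Complex.ofReal).mulVec v = μ • v := by
    have := hv.apply_eq_smul
    rwa [Matrix.toLin'_apply] at this
  have hker : (μ • (1 : Matrix (Fin 3) (Fin 3) ℂ)
      - (NewmarkMatrix ω h α β).map Complex.ofReal).mulVec v = 0 := by
    rw [Matrix.sub_mulVec, Matrix.smul_mulVec, Matrix.one_mulVec, hmul, sub_self]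
  have hdet : (μ • (1 : Matrix (Fin 3) (Fin 3) ℂ)
      - (NewmarkMatrix ω h α β).map Complex.ofReal).det = 0 :=
    Matrix.exists_mulVec_eq_zero_iff.mp ⟨v, hv.right, hker⟩
  have hkpos : 0 < ω ^ 2 * h ^ 2 := by positivity
  have hβ4 : (1 : ℝ) / 4 ≤ β := by linarith
  have hDpos : (0 : ℝ) < 1 + β * ω ^ 2 * h ^ 2 := by nlinarith
  have hDC : ((1 : ℂ) + (β : ℂ) * (ω : ℂ) ^ 2 * (h : ℂ) ^ 2) ≠ 0 := by
    have h1 : ((1 + β * ω ^ 2 * h ^ 2 : ℝ) : ℂ) ≠ 0 := by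
      exact_mod_cast ne_of_gt hDpos
    push_cast at h1
    exact h1
  rw [newmark_det α β ω h μ hDC] at hdet
  rcases mul_eq_zero.mp hdet with h0 | hq
  · simp [h0]
  · apply quad_root_abs_le_one _ _ μ hq
    · rw [div_le_one hDpos]; nlinarith
    · have key : 1 - (2 - (α + 1 / 2 - 2 * β) * (ω ^ 2 * h ^ 2)) / (1 + β * ω ^ 2 * h ^ 2)
          + (1 + (1 / 2 - α + β) * (ω ^ 2 * h ^ 2)) / (1 + β * ω ^ 2 * h ^ 2)
          = (ω ^ 2 * h ^ 2) / (1 + β * ω ^ 2 * h ^ 2) := by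
        field_simp
        ring
      rw [key]; positivity
    · have key : 1 + (2 - (α + 1 / 2 - 2 * β) * (ω ^ 2 * h ^ 2)) / (1 + β * ω ^ 2 * h ^ 2)
          + (1 + (1 / 2 - α + β) * (ω ^ 2 * h ^ 2)) / (1 + β * ω ^ 2 * h ^ 2)
          = (4 + (4 * β - 2 * α) * (ω ^ 2 * h ^ 2)) / (1 + β * ω ^ 2 * h ^ 2) := by
        field_simp
        ring
      rw [key]
      apply div_nonneg _ (le_of_lt hDpos)
      nlinarith
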